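/- Let p : E ⥤ D be a cloven Grothendieck fibration, let j : D, and let Q be a commuting square in the fibre category E_j which is a pullback square in E_j. Suppose that for every morphism u : i ⟶ j of D, the reindexing functor u^* : E_j ⥤ E_i sends Q to a pullback square in E_i. Then Q is a pullback square in the total category E. -/

import Mathlib

open CategoryTheory CategoryTheory.Limits

/-- `φ` is a (strongly) cartesian morphism over `u : i ⟶ j` for the functor `p`. -/
def IsCart {E D : Type*} [Category E] [Category D] (p : E ⥤ D) {i j : D} (u : i ⟶ j)
    {z x : E} (φ : z ⟶ x) : Prop :=
  p.IsHomLift u φ ∧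
    ∀ ⦃i' : D⦄ (v : i' ⟶ i) ⦃w : E⦄ (ψ : w ⟶ x), p.IsHomLift (v ≫ u) ψ →
      ∃! χ : w ⟶ z, p.IsHomLift v χ ∧ χ ≫ φ = ψ


/-- A morphism in the fibre category `Fiber p j` determined by a morphism of `E`
lying over `𝟙 j`. -/
def fibHom {E D : Type*} [Category E] [Category D] (p : E ⥤ D) {j : D} {a b : E}
    (ha : p.obj a = j) (hb : p.obj b = j) (f : a ⟶ b) (hf : p.IsHomLift (𝟙 j) f) :
    Functor.Fiber.mk ha ⟶ Functor.Fiber.mk hb :=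
  Subtype.mk f hf

/-- **Fibrewise pullbacks stable under reindexing are pullbacks in the total category.**
Let `p : E ⥤ D` be a Grothendieck fibration and let `Q = (f, g, h, k)` be a commuting
square in the fibre over `j` which is a pullback square in the fibre category
`Fiber p j`.  If for every `u : i ⟶ j`, every reindexing of `Q` along `u` (i.e. every
square of morphisms induced between cartesian lifts of `u` at the four corners) is a
pullback square in `Fiber p i`, then `Q` is a pullback square in `E`. -/
theorem fibrewise_pullback_isPullback {E D : Type*} [Category E] [Category D]
    (p : E ⥤ D)
    -- `p` is a fibration (and we may choose cartesian lifts, i.e. a cleavage)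
    (hfib : ∀ {i j : D} (u : i ⟶ j) (x : E), p.obj x = j →
      ∃ (z : E) (φ : z ⟶ x), IsCart p u φ)
    {j : D} {a b c d : E}
    (ha : p.obj a = j) (hb : p.obj b = j) (hc : p.obj c = j) (hd : p.obj d = j)
    (f : a ⟶ b) (g : a ⟶ c) (h : b ⟶ d) (k : c ⟶ d)
    (hf : p.IsHomLift (𝟙 j) f) (hg : p.IsHomLift (𝟙 j) g)
    (hh : p.IsHomLift (𝟙 j) h) (hk : p.IsHomLift (𝟙 j) k)
    (hcomm : f ≫ h = g ≫ k)
    -- `Q` is a pullback square in the fibre over `j`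
    (hQ : IsPullback (C := Functor.Fiber p j)
      (fibHom p ha hb f hf) (fibHom p ha hc g hg)
      (fibHom p hb hd h hh) (fibHom p hc hd k hk))
    -- every reindexing of `Q` is a pullback square in its fibre
    (hre : ∀ {i : D} (u : i ⟶ j) {a' b' c' d' : E}
      (ha' : p.obj a' = i) (hb' : p.obj b' = i) (hc' : p.obj c' = i) (hd' : p.obj d' = i)
      (φa : a' ⟶ a) (φb : b' ⟶ b) (φc : c' ⟶ c) (φd : d' ⟶ d),
      IsCart p u φa → IsCart p u φb → IsCart p u φc → IsCart p u φd →
      ∀ (f' : a' ⟶ b') (g' : a' ⟶ c') (h' : b' ⟶ d') (k' : c' ⟶ d')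
        (hf' : p.IsHomLift (𝟙 i) f') (hg' : p.IsHomLift (𝟙 i) g')
        (hh' : p.IsHomLift (𝟙 i) h') (hk' : p.IsHomLift (𝟙 i) k'),
        f' ≫ φb = φa ≫ f → g' ≫ φc = φa ≫ g →
        h' ≫ φd = φb ≫ h → k' ≫ φd = φc ≫ k →
        IsPullback (C := Functor.Fiber p i)
          (fibHom p ha' hb' f' hf') (fibHom p ha' hc' g' hg')
          (fibHom p hb' hd' h' hh') (fibHom p hc' hd' k' hk')) :
    -- then `Q` is a pullback square in `E`
    IsPullback f g h k := by
  -- the key universal property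
  have key : ∀ (w : E) (α : w ⟶ b) (β : w ⟶ c), α ≫ h = β ≫ k →
      ∃! m : w ⟶ a, m ≫ f = α ∧ m ≫ g = β := by
    intro w α β hw
    set i := p.obj w with hi
    set u : i ⟶ j := p.map α ≫ eqToHom hb with hu
    -- basic eqToHom facts for the maps of the square
    have ef : p.map f ≫ eqToHom hb = eqToHom ha := by
      haveI := hf; rw [IsHomLift.fac' p (𝟙 j) f]; simp
    have eg : p.map g ≫ eqToHom hc = eqToHom ha := by
      haveI := hg; rw [IsHomLift.fac' p (𝟙 j) g]; simp
    have eh : p.map h ≫ eqToHom hd = eqToHom hb := by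
      haveI := hh; rw [IsHomLift.fac' p (𝟙 j) h]; simp
    have ek : p.map k ≫ eqToHom hd = eqToHom hc := by
      haveI := hk; rw [IsHomLift.fac' p (𝟙 j) k]; simp
    -- α and β lift u
    have hα : p.IsHomLift u α :=
      IsHomLift.of_commsq p u α rfl hb (by simp [hu])
    have hβeq : p.map β ≫ eqToHom hc = u := by
      calc p.map β ≫ eqToHom hc = p.map β ≫ p.map k ≫ eqToHom hd := by rw [ek]
        _ = p.map (β ≫ k) ≫ eqToHom hd := by rw [p.map_comp, Category.assoc]
        _ = p.map (α ≫ h) ≫ eqToHom hd := by rw [hw]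
        _ = p.map α ≫ eqToHom hb := by rw [p.map_comp, Category.assoc, eh]
    have hβ : p.IsHomLift u β :=
      IsHomLift.of_commsq p u β rfl hc (by simp [hβeq])
    -- choose cartesian lifts of u at the four corners
    obtain ⟨a', φa, hca⟩ := hfib u a ha
    obtain ⟨b', φb, hcb⟩ := hfib u b hb
    obtain ⟨c', φc, hcc⟩ := hfib u c hc
    obtain ⟨d', φd, hcd⟩ := hfib u d hd
    haveI := hca.1; haveI := hcb.1; haveI := hcc.1; haveI := hcd.1
    have ha' : p.obj a' = i := IsHomLift.domain_eq p u φa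
    have hb' : p.obj b' = i := IsHomLift.domain_eq p u φb
    have hc' : p.obj c' = i := IsHomLift.domain_eq p u φc
    have hd' : p.obj d' = i := IsHomLift.domain_eq p u φd
    -- unique vertical lifts through cartesian morphisms
    have lift1 : ∀ {z x : E} {φ : z ⟶ x}, IsCart p u φ → ∀ {w' : E} (ψ : w' ⟶ x),
        p.IsHomLift u ψ → ∃! χ : w' ⟶ z, p.IsHomLift (𝟙 i) χ ∧ χ ≫ φ = ψ := by
      intro z x φ hφ w' ψ hψ
      exact hφ.2 (𝟙 i) ψ (by rwa [Category.id_comp])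
    -- composites over u
    have compu : ∀ {x y z : E} (φ : x ⟶ y) (ψ : y ⟶ z), p.IsHomLift u φ →
        p.IsHomLift (𝟙 j) ψ → p.IsHomLift u (φ ≫ ψ) := by
      intro x y z φ ψ h1 h2
      haveI := h1; haveI := h2; infer_instance
    -- the reindexed square
    obtain ⟨f', ⟨hf'l, hf'c⟩, hf'u⟩ := lift1 hcb (φa ≫ f) (compu _ _ hca.1 hf)
    obtain ⟨g', ⟨hg'l, hg'c⟩, hg'u⟩ := lift1 hcc (φa ≫ g) (compu _ _ hca.1 hg)
    obtain ⟨h', ⟨hh'l, hh'c⟩, hh'u⟩ := lift1 hcd (φb ≫ h) (compu _ _ hcb.1 hh)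
    obtain ⟨k', ⟨hk'l, hk'c⟩, hk'u⟩ := lift1 hcd (φc ≫ k) (compu _ _ hcc.1 hk)
    have P := hre u ha' hb' hc' hd' φa φb φc φd hca hcb hcc hcd f' g' h' k'
      hf'l hg'l hh'l hk'l hf'c hg'c hh'c hk'c
    -- lift the cone legs to the fibre over i
    obtain ⟨α', ⟨hα'l, hα'c⟩, hα'u⟩ := lift1 hcb α hα
    obtain ⟨β', ⟨hβ'l, hβ'c⟩, hβ'u⟩ := lift1 hcc β hβ
    -- the lifted cone commutes
    obtain ⟨t, -, htu⟩ := lift1 hcd (α ≫ h) (compu _ _ hα hh)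
    have e1 : α' ≫ h' = β' ≫ k' := by
      have h1 : α' ≫ h' = t := by
        refine htu _ ⟨by haveI := hα'l; haveI := hh'l; infer_instance, ?_⟩
        rw [Category.assoc, hh'c, ← Category.assoc, hα'c]
      have h2 : β' ≫ k' = t := by
        refine htu _ ⟨by haveI := hβ'l; haveI := hk'l; infer_instance, ?_⟩
        rw [Category.assoc, hk'c, ← Category.assoc, hβ'c, hw]
      rw [h1, h2]
    have hwobj : p.obj w = i := rfl
    have hfcomm : fibHom p hwobj hb' α' hα'l ≫ fibHom p hb' hd' h' hh'l
        = fibHom p hwobj hc' β' hβ'l ≫ fibHom p hc' hd' k' hk'l := Subtype.ext e1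
    -- the lift in the fibre over i
    set l := P.lift (fibHom p hwobj hb' α' hα'l) (fibHom p hwobj hc' β' hβ'l) hfcomm with hl
    have hl1 : l.1 ≫ f' = α' := congrArg Subtype.val (P.lift_fst _ _ hfcomm)
    have hl2 : l.1 ≫ g' = β' := congrArg Subtype.val (P.lift_snd _ _ hfcomm)
    refine ⟨l.1 ≫ φa, ⟨?_, ?_⟩, ?_⟩
    · exact (Category.assoc _ _ _).trans ((congrArg (l.1 ≫ ·) hf'c.symm).trans
        ((Category.assoc _ _ _).symm.trans ((congrArg (· ≫ φb) hl1).trans hα'c)))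
    · exact (Category.assoc _ _ _).trans ((congrArg (l.1 ≫ ·) hg'c.symm).trans
        ((Category.assoc _ _ _).symm.trans ((congrArg (· ≫ φc) hl2).trans hβ'c)))
    · -- uniqueness
      rintro m ⟨hm1, hm2⟩
      have hmu : p.IsHomLift u m := by
        refine IsHomLift.of_commsq p u m rfl ha ?_
        have : p.map m ≫ eqToHom ha = p.map α ≫ eqToHom hb := by
          calc p.map m ≫ eqToHom ha = p.map m ≫ p.map f ≫ eqToHom hb := by rw [ef]
            _ = p.map (m ≫ f) ≫ eqToHom hb := by rw [p.map_comp, Category.assoc]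
            _ = p.map α ≫ eqToHom hb := by rw [hm1]
        simp [this, hu]
      obtain ⟨m', ⟨hm'l, hm'c⟩, -⟩ := lift1 hca m hmu
      have hmf : m' ≫ f' = α' := by
        refine hα'u _ ⟨by haveI := hm'l; haveI := hf'l; infer_instance, ?_⟩
        rw [Category.assoc, hf'c, ← Category.assoc, hm'c, hm1]
      have hmg : m' ≫ g' = β' := by
        refine hβ'u _ ⟨by haveI := hm'l; haveI := hg'l; infer_instance, ?_⟩
        rw [Category.assoc, hg'c, ← Category.assoc, hm'c, hm2]
      have : fibHom p hwobj ha' m' hm'l = l := by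
        refine P.hom_ext ?_ ?_
        · rw [P.lift_fst]; exact Subtype.ext hmf
        · rw [P.lift_snd]; exact Subtype.ext hmg
      rw [← hm'c]
      exact congrArg (fun t => Subtype.val t ≫ φa) this
  -- conclude
  exact IsPullback.of_isLimit (PullbackCone.IsLimit.mk hcomm
    (fun s => (key s.pt s.fst s.snd s.condition).exists.choose)
    (fun s => (key s.pt s.fst s.snd s.condition).exists.choose_spec.1)
    (fun s => (key s.pt s.fst s.snd s.condition).exists.choose_spec.2)
    (fun s m hm1 hm2 => (key s.pt s.fst s.snd s.condition).unique ⟨hm1, hm2⟩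
      (key s.pt s.fst s.snd s.condition).exists.choose_spec))
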